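/- Let (A, w) be an EYM solution on (0, R) for some R > 0 such that 0 < A(r) ≤ 1 for all r ∈ (0, R), w(r) → 1 as r → 0⁺, and for all r ∈ (0, R) one has w(r) < 1 and w'(r) < 0. Then there exists r₀ ∈ (0, R), independent of ε, such that for every ε > 0 and every b ∈ (0, r₀): if 1 − ε·b ≤ w(b), then 1 − ε·r ≤ w(r) < 1 for all r ∈ (0, b). -/

import Mathlib

open Filter Topology Set

/-- The quantity Φ(r) = 1 − A(r) − (1 − w(r)²)²/r² − Λ·r². -/
noncomputable def Phi (Λ : ℝ) (A w : ℝ → ℝ) (r : ℝ) : ℝ :=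
  1 - A r - (1 - (w r) ^ 2) ^ 2 / r ^ 2 - Λ * r ^ 2

/-- `(A, w)` is a static spherically symmetric Einstein SU(2)-Yang–Mills
solution with cosmological constant `Λ` on the set `I`. -/
def IsEYM (Λ : ℝ) (A w : ℝ → ℝ) (I : Set ℝ) : Prop :=
  (∀ r ∈ I, DifferentiableAt ℝ A r) ∧
  (∀ r ∈ I, DifferentiableAt ℝ w r) ∧
  (∀ r ∈ I, DifferentiableAt ℝ (deriv w) r) ∧
  (∀ r ∈ I, r * deriv A r + 2 * A r * (deriv w r) ^ 2 = Phi Λ A w r) ∧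
  (∀ r ∈ I, r ^ 2 * A r * deriv (deriv w) r + r * Phi Λ A w r * deriv w r
      + w r * (1 - (w r) ^ 2) = 0)


private lemma stmt10_aux1 (Λ c : ℝ) (hc : 0 < c) (hcL : c < 1 / (2 * (1 + |Λ|))) :
    |Λ| * c ^ 2 ≤ 1/4 := by
  have h : (0:ℝ) ≤ |Λ| := abs_nonneg Λ
  have hpos : (0:ℝ) < 2 * (1 + |Λ|) := by linarith
  have h1 : (2 * (1 + |Λ|)) * c < 1 := by
    rw [lt_div_iff₀ hpos] at hcL
    linarith [hcL]
  have h2 : c < 1/2 := by nlinarith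
  nlinarith [mul_nonneg h hc.le, mul_pos hc hc]

private lemma stmt10_aux2 (P wc c ε : ℝ) (hΦ : P ≤ 5/4) (h9 : 9/10 < wc)
    (hwc1 : wc - 1 + ε * c < 0) (hc : 0 < c) (hε : 0 < ε) :
    0 < c * P * (-ε) + wc * (1 - wc ^ 2) := by
  have hεc : 0 < ε * c := mul_pos hε hc
  have h1 : ε * c < 1 - wc := by linarith
  have hA : (171:ℝ)/100 < wc * (1 + wc) := by nlinarith
  have hB : (171:ℝ)/100 * (ε * c) < (wc * (1 + wc)) * (1 - wc) :=
    mul_lt_mul'' hA h1 (by norm_num) hεc.le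
  have hC : ε * c * P ≤ ε * c * (5/4) := mul_le_mul_of_nonneg_left hΦ hεc.le
  nlinarith

/-- comparison of `w` with the lines `1 − ε r` (Lemma on ε). -/
theorem stmt_10 (Λ R : ℝ) (A w : ℝ → ℝ) (hR : 0 < R)
    (hEYM : IsEYM Λ A w (Ioo 0 R))
    (hA : ∀ r ∈ Ioo (0 : ℝ) R, 0 < A r ∧ A r ≤ 1)
    (hwlim : Filter.Tendsto w (𝓝[>] 0) (𝓝 1))
    (hw : ∀ r ∈ Ioo (0 : ℝ) R, w r < 1 ∧ deriv w r < 0) :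
    ∃ r₀ ∈ Ioo (0 : ℝ) R, ∀ ε : ℝ, 0 < ε → ∀ b ∈ Ioo (0 : ℝ) r₀,
      1 - ε * b ≤ w b →
      ∀ r ∈ Ioo (0 : ℝ) b, 1 - ε * r ≤ w r ∧ w r < 1 := by
  obtain ⟨hdA, hdw, hddw, heq1, heq2⟩ := hEYM
  -- choose δ so that w > 9/10 on (0, δ)
  have h910 : ∀ᶠ r in 𝓝[>] (0:ℝ), (9:ℝ)/10 < w r :=
    hwlim.eventually (eventually_gt_nhds (by norm_num))
  obtain ⟨δ, hδmem, hδ⟩ := mem_nhdsGT_iff_exists_Ioo_subset.1 h910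
  have hδpos : (0:ℝ) < δ := hδmem
  set L : ℝ := 1 / (2 * (1 + |Λ|)) with hL
  have hLpos : 0 < L := by positivity
  set r₀ : ℝ := min δ (min (R/2) L) with hr₀
  have hr₀pos : 0 < r₀ := lt_min hδpos (lt_min (by linarith) hLpos)
  have hr₀δ : r₀ ≤ δ := min_le_left _ _
  have hr₀R : r₀ < R := lt_of_le_of_lt ((min_le_right _ _).trans (min_le_left _ _)) (by linarith)
  have hr₀L : r₀ ≤ L := (min_le_right _ _).trans (min_le_right _ _)
  refine ⟨r₀, ⟨hr₀pos, hr₀R⟩, ?_⟩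
  intro ε hε b hb hwb
  obtain ⟨hb0, hbr₀⟩ := hb
  have hbR : b < R := hbr₀.trans hr₀R
  -- the comparison function
  set f : ℝ → ℝ := fun r => w r - 1 + ε * r with hf
  have hfd : ∀ x ∈ Ioo (0:ℝ) R, HasDerivAt f (deriv w x + ε) x := by
    intro x hx
    have h1 : HasDerivAt w (deriv w x) x := (hdw x hx).hasDerivAt
    have h2 : HasDerivAt (fun r : ℝ => ε * r) ε x := by
      simpa using (hasDerivAt_id x).const_mul ε
    exact (h1.sub_const 1).add h2
  intro r hr
  obtain ⟨hr0, hrb⟩ := hr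
  have hrR : r < R := hrb.trans hbR
  have hwr1 : w r < 1 := (hw r ⟨hr0, hrR⟩).1
  refine ⟨?_, hwr1⟩
  by_contra hcon
  push_neg at hcon
  have hfr : f r < 0 := by simp only [hf]; linarith
  -- find a < r with f a > f r, using f → 0 at 0⁺
  have hflim : Tendsto f (𝓝[>] (0:ℝ)) (𝓝 0) := by
    have h2 : Tendsto (fun x : ℝ => ε * x) (𝓝[>] (0:ℝ)) (𝓝 (ε * 0)) :=
      ((continuous_const.mul continuous_id).tendsto 0).mono_left nhdsWithin_le_nhds
    have := (hwlim.sub_const 1).add h2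
    simpa using this
  have hev : ∀ᶠ x in 𝓝[>] (0:ℝ), f r < f x :=
    hflim.eventually (eventually_gt_nhds hfr)
  obtain ⟨u, humem, hu⟩ := mem_nhdsGT_iff_exists_Ioo_subset.1 hev
  have hupos : (0:ℝ) < u := humem
  set a : ℝ := min (u/2) (r/2) with ha
  have hapos : 0 < a := lt_min (by linarith) (by linarith)
  have har : a < r := (min_le_right _ _).trans_lt (by linarith)
  have hfa : f r < f a := hu ⟨hapos, (min_le_left _ _).trans_lt (by linarith)⟩
  have hab : a < b := har.trans hrb
  have hIccsub : Icc a b ⊆ Ioo 0 R := fun x hx =>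
    ⟨hapos.trans_le hx.1, lt_of_le_of_lt hx.2 hbR⟩
  have hfcont : ContinuousOn f (Icc a b) := fun x hx =>
    ((hfd x (hIccsub hx)).continuousAt).continuousWithinAt
  -- minimum point c of f on [a,b]
  obtain ⟨c, hcmem, hcmin⟩ := isCompact_Icc.exists_isMinOn (nonempty_Icc.2 hab.le) hfcont
  have hfcr : f c ≤ f r := hcmin ⟨har.le, hrb.le⟩
  have hfb : 0 ≤ f b := by simp only [hf]; linarith
  have hca : a < c := lt_of_le_of_ne hcmem.1 (by rintro rfl; exact absurd hfa (not_lt.2 hfcr))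
  have hcb : c < b := lt_of_le_of_ne hcmem.2 (by rintro rfl; linarith)
  have hcR : c ∈ Ioo (0:ℝ) R := hIccsub hcmem
  -- local min ⇒ deriv f c = 0 ⇒ deriv w c = -ε
  have hloc : IsLocalMin f c := hcmin.isLocalMin (Icc_mem_nhds hca hcb)
  have hderiv0 : deriv f c = 0 := hloc.deriv_eq_zero
  have hderivfc : deriv f c = deriv w c + ε := (hfd c hcR).deriv
  have hwc' : deriv w c = -ε := by linarith [hderivfc ▸ hderiv0]
  -- bounds at c
  have hc0 : 0 < c := hcR.1
  have hcδ : c < δ := lt_of_lt_of_le (hcb.trans hbr₀) hr₀δ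
  have hwc9 : (9:ℝ)/10 < w c := hδ ⟨hc0, hcδ⟩
  have hwcε : w c - 1 + ε * c < 0 := by
    have : f c < 0 := hfcr.trans_lt hfr
    simpa [hf] using this
  have hAc : 0 < A c := (hA c hcR).1
  have hcL : c < L := lt_of_lt_of_le (hcb.trans hbr₀) hr₀L
  have habsΛ : 0 ≤ |Λ| := abs_nonneg Λ
  -- Φ(c) ≤ 5/4
  have hΦ : Phi Λ A w c ≤ 5/4 := by
    have hdivnn : 0 ≤ (1 - (w c) ^ 2) ^ 2 / c ^ 2 := by positivity
    have hΛc : -(|Λ| * c ^ 2) ≤ Λ * c ^ 2 := by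
      have := mul_le_mul_of_nonneg_right (neg_abs_le Λ) (sq_nonneg c)
      linarith [this]
    have hcL2 : |Λ| * c ^ 2 ≤ 1/4 := stmt10_aux1 Λ c hc0 (by rw [hL] at hcL; exact hcL)
    simp only [Phi]
    linarith
  -- second derivative at c is negative
  have hode := heq2 c hcR
  rw [hwc'] at hode
  have hnum : 0 < c * Phi Λ A w c * (-ε) + w c * (1 - (w c) ^ 2) :=
    stmt10_aux2 (Phi Λ A w c) (w c) c ε hΦ hwc9 hwcε hc0 hε
  have hww : deriv (deriv w) c < 0 := by
    have hpos : 0 < c ^ 2 * A c := by positivity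
    have h5 : c ^ 2 * A c * deriv (deriv w) c < 0 := by linarith
    by_contra hcon3
    push_neg at hcon3
    exact absurd (mul_nonneg hpos.le hcon3) (not_le.2 h5)
  -- derive contradiction: deriv w > -ε just left of c, so f increasing, so f < f c left of c
  have hdd : HasDerivAt (deriv w) (deriv (deriv w) c) c := (hddw c hcR).hasDerivAt
  have hslope := hasDerivAt_iff_tendsto_slope.1 hdd
  have hevs : ∀ᶠ x in 𝓝[≠] c, slope (deriv w) c x < 0 :=
    hslope.eventually (eventually_lt_nhds hww)
  have hevl : ∀ᶠ x in 𝓝[<] c, slope (deriv w) c x < 0 :=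
    hevs.filter_mono (nhdsWithin_mono c fun x hx => ne_of_lt hx)
  obtain ⟨l, hlc, hls⟩ := mem_nhdsLT_iff_exists_Ioo_subset.1 hevl
  set a' : ℝ := max a l with ha'
  have ha'c : a' < c := max_lt hca hlc
  set x₀ : ℝ := (a' + c) / 2 with hx₀
  have hx₀1 : a' < x₀ := by simp only [hx₀]; linarith
  have hx₀2 : x₀ < c := by simp only [hx₀]; linarith
  -- on (x₀, c), deriv f > 0
  have hder_pos : ∀ x ∈ Ioo x₀ c, 0 < deriv f x := by
    intro x hx
    have hxl' : x ∈ Ioo l c := ⟨lt_of_le_of_lt (le_max_right a l) (hx₀1.trans hx.1), hx.2⟩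
    have hs : slope (deriv w) c x < 0 := hls hxl'
    rw [slope_def_field] at hs
    have hxc : x - c < 0 := by linarith [hx.2]
    have : deriv w x - deriv w c > 0 := by
      by_contra hcon2
      push_neg at hcon2
      have : 0 ≤ (deriv w x - deriv w c) / (x - c) := div_nonneg_of_nonpos (by linarith) hxc.le
      linarith
    have hxR : x ∈ Ioo (0:ℝ) R := hIccsub ⟨(le_max_left a l).trans (hx₀1.trans hx.1).le, (hx.2.trans hcb).le⟩
    rw [(hfd x hxR).deriv]
    rw [hwc'] at this
    linarith
  -- f strictly mono on [x₀, c]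
  have hsub2 : Icc x₀ c ⊆ Icc a b :=
    Icc_subset_Icc ((le_max_left a l).trans hx₀1.le) hcb.le
  have hmono : StrictMonoOn f (Icc x₀ c) := by
    apply strictMonoOn_of_deriv_pos (convex_Icc x₀ c) (hfcont.mono hsub2)
    intro x hx
    rw [interior_Icc] at hx
    exact hder_pos x hx
  have hlt : f x₀ < f c := hmono ⟨le_refl x₀, hx₀2.le⟩ ⟨hx₀2.le, le_refl c⟩ hx₀2
  have hge : f c ≤ f x₀ := hcmin (hsub2 ⟨le_refl x₀, hx₀2.le⟩)
  linarith
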